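/- Let α ∈ ℝ, let F : ℂ \ [α,∞) → ℂ^{q×q} be holomorphic, and define F⁰(z) := (z - α)·F(z). Suppose Im F(w) and Im F⁰(w) are positive semidefinite for every w in the open upper half-plane. Then Re F(x) is positive semidefinite for every real x < α. -/

import Mathlib

open Matrix Complex MeasureTheory Filter
open scoped ComplexOrder

/-- The "imaginary part" of a complex square matrix: `Im M = (M - M*)/(2i)`. -/
noncomputable def mIm {q : ℕ} (M : Matrix (Fin q) (Fin q) ℂ) : Matrix (Fin q) (Fin q) ℂ :=
  ((2 : ℂ) * Complex.I)⁻¹ • (M - Mᴴ)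

/-- The "real part" of a complex square matrix: `Re M = (M + M*)/2`. -/
noncomputable def mRe {q : ℕ} (M : Matrix (Fin q) (Fin q) ℂ) : Matrix (Fin q) (Fin q) ℂ :=
  ((2 : ℂ))⁻¹ • (M + Mᴴ)

lemma psd_real_smul {q : ℕ} {M : Matrix (Fin q) (Fin q) ℂ} (hM : M.PosSemidef) {t : ℝ}
    (ht : 0 ≤ t) : ((t : ℂ) • M).PosSemidef := by
  refine Matrix.posSemidef_iff_dotProduct_mulVec.mpr ⟨?_, ?_⟩
  · unfold Matrix.IsHermitian
    rw [Matrix.conjTranspose_smul, hM.1.eq]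
    simp
  · intro v
    rw [Matrix.smul_mulVec, dotProduct_smul, smul_eq_mul]
    exact mul_nonneg (by exact_mod_cast Complex.zero_le_real.2 ht) (hM.dotProduct_mulVec_nonneg v)

/-- The key algebraic identity: on the point `x + t*I`, the real part of `F` is a
nonnegative combination of the imaginary parts of `F⁰` and `F`. -/
lemma key_identity {q : ℕ} (α x t : ℝ) (ht : t ≠ 0) (M : Matrix (Fin q) (Fin q) ℂ) :
    mRe M = ((t⁻¹ : ℝ) : ℂ) • mIm (((x : ℂ) + (t : ℂ) * Complex.I - (α : ℂ)) • M)
      + (((t⁻¹ * (α - x) : ℝ)) : ℂ) • mIm M := by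
  ext i j
  simp only [mRe, mIm, Matrix.add_apply, Matrix.smul_apply, Matrix.sub_apply,
    Matrix.conjTranspose_apply, smul_eq_mul, star_mul',
    RCLike.star_def, map_sub, map_add, _root_.map_mul, Complex.conj_ofReal, Complex.conj_I]
  have ht' : (t : ℂ) ≠ 0 := by exact_mod_cast ht
  have hI : Complex.I ≠ 0 := Complex.I_ne_zero
  push_cast
  field_simp
  ring_nf

theorem stmt15 {q : ℕ} (α : ℝ) (F : ℂ → Matrix (Fin q) (Fin q) ℂ)
    (hholo : ∀ j k : Fin q,
      DifferentiableOn ℂ (fun z => F z j k) {z : ℂ | ∀ t : ℝ, α ≤ t → z ≠ (t : ℂ)})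
    (hup : ∀ w : ℂ, 0 < w.im → (mIm (F w)).PosSemidef)
    (hup' : ∀ w : ℂ, 0 < w.im → (mIm ((w - (α : ℂ)) • F w)).PosSemidef) :
    ∀ x : ℝ, x < α → (mRe (F (x : ℂ))).PosSemidef := by
  intro x hx
  set S : Set ℂ := {z : ℂ | ∀ t : ℝ, α ≤ t → z ≠ (t : ℂ)} with hS
  have hSopen : IsOpen S := by
    rw [← isClosed_compl_iff]
    have : Sᶜ = Complex.ofReal '' Set.Ici α := by
      ext z
      simp only [Set.mem_compl_iff, hS, Set.mem_setOf_eq, not_forall, Set.mem_image,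
        Set.mem_Ici]
      constructor
      · rintro ⟨t, ht, hz⟩; exact ⟨t, ht, (not_not.1 hz).symm⟩
      · rintro ⟨t, ht, rfl⟩; exact ⟨t, ht, by simp⟩
    rw [this]
    exact (Complex.isometry_ofReal.isClosedEmbedding).isClosedMap _ isClosed_Ici
  have hxS : (x : ℂ) ∈ S := by
    intro t ht h
    have : x = t := by exact_mod_cast h
    linarith
  set w : ℕ → ℂ := fun n => (x : ℂ) + (((n : ℝ) + 1)⁻¹ : ℝ) * Complex.I with hw
  have hwim : ∀ n, 0 < (w n).im := by
    intro n
    have him : (w n).im = ((n : ℝ) + 1)⁻¹ := by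
      simp only [hw, Complex.add_im, Complex.ofReal_im, Complex.mul_im, Complex.ofReal_re,
        Complex.I_im, Complex.I_re, mul_zero, mul_one, zero_add, add_zero]
    rw [him]
    positivity
  have hwtend : Filter.Tendsto w Filter.atTop (nhds (x : ℂ)) := by
    have h1 : Filter.Tendsto (fun n : ℕ => ((n : ℝ) + 1)⁻¹) Filter.atTop (nhds 0) := by
      simpa using tendsto_one_div_add_atTop_nhds_zero_nat (𝕜 := ℝ)
    have h2 : Filter.Tendsto (fun n : ℕ => ((((n : ℝ) + 1)⁻¹ : ℝ) : ℂ)) Filter.atTop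
        (nhds 0) := by
      have := (Complex.continuous_ofReal.tendsto 0).comp h1
      exact this
    have h3 := (h2.mul_const Complex.I).const_add (x : ℂ)
    rw [hw]
    simpa only [zero_mul, add_zero] using h3
  have hcont : ∀ j k : Fin q, Filter.Tendsto (fun n => F (w n) j k) Filter.atTop
      (nhds (F (x : ℂ) j k)) := by
    intro j k
    have hc : ContinuousAt (fun z => F z j k) (x : ℂ) :=
      ((hholo j k).continuousOn.continuousAt (hSopen.mem_nhds hxS))
    exact hc.tendsto.comp hwtend
  have hpsd : ∀ n, (mRe (F (w n))).PosSemidef := by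
    intro n
    have htpos : (0 : ℝ) < ((n : ℝ) + 1)⁻¹ := by positivity
    have hid := key_identity α x (((n : ℝ) + 1)⁻¹) (ne_of_gt htpos) (F (w n))
    have hwn : (x : ℂ) + ((((n : ℝ) + 1)⁻¹ : ℝ) : ℂ) * Complex.I - (α : ℂ) =
        (w n) - (α : ℂ) := by simp [hw]
    rw [hwn] at hid
    rw [hid]
    exact (psd_real_smul (hup' (w n) (hwim n)) (by positivity)).add
      (psd_real_smul (hup (w n) (hwim n)) (mul_nonneg (by positivity) (by linarith)))
  have hherm : (mRe (F (x : ℂ))).IsHermitian := by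
    unfold Matrix.IsHermitian mRe
    rw [Matrix.conjTranspose_smul, Matrix.conjTranspose_add, Matrix.conjTranspose_conjTranspose]
    simp [add_comm]
  refine Matrix.posSemidef_iff_dotProduct_mulVec.mpr ⟨hherm, fun v => ?_⟩
  have hqf : Filter.Tendsto (fun n => star v ⬝ᵥ (mRe (F (w n))) *ᵥ v) Filter.atTop
      (nhds (star v ⬝ᵥ (mRe (F (x : ℂ))) *ᵥ v)) := by
    simp only [mRe, dotProduct, Matrix.mulVec, Matrix.smul_apply, Matrix.add_apply,
      Matrix.conjTranspose_apply, dotProduct, Pi.star_apply, smul_eq_mul]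
    apply tendsto_finset_sum
    intro i _
    apply Filter.Tendsto.mul tendsto_const_nhds
    apply tendsto_finset_sum
    intro j _
    exact ((Filter.Tendsto.add (hcont i j) ((Complex.continuous_conj.tendsto _).comp
      (hcont j i))).const_mul _).mul_const _
  exact ge_of_tendsto' hqf (fun n => (hpsd n).dotProduct_mulVec_nonneg v)
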